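/- There exists a universal constant c > 0 such that for all integers n ≥ 2, r ≥ 1 and s ≥ 1, there exists a deterministic adaptive membership-query algorithm with query budget ⌈c·(s·N((s−1, r); sr) + r·s·log₂ n)⌉ that exactly learns the class of all s-term r-MDNF functions on {0,1}^n, where N((p,q); m) is the minimum cardinality of a (p,q)-cover for a set of size m. -/

import Mathlib

/-- The transcript of a deterministic adaptive membership-query algorithm with query map `σ`
run on target `f` for `m` queries: the list `(b₁, …, b_m)` with `b_i = f (σ (b₁, …, b_{i-1}))`. -/
def transcript {n : ℕ} (σ : List Bool → (Fin n → Bool)) (f : (Fin n → Bool) → Bool) :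
    ℕ → List Bool
  | 0 => []
  | m + 1 => transcript σ f m ++ [f (σ (transcript σ f m))]

/-- `f : {0,1}^n → {0,1}` is an `s`-term `r`-MDNF if there are `p ≤ s` nonempty subsets
`T₁, …, T_p` of the coordinates, each of size at most `r`, such that `f a = 1` iff
for some `i` all coordinates of `a` indexed by `T i` equal `1`. -/
def IsMDNF (n s r : ℕ) (f : (Fin n → Bool) → Bool) : Prop :=
  ∃ (p : ℕ) (T : Fin p → Finset (Fin n)), p ≤ s ∧
    (∀ i, (T i).Nonempty ∧ (T i).card ≤ r) ∧
    ∀ a : Fin n → Bool, f a = true ↔ ∃ i, ∀ j ∈ T i, a j = true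

/-- `A` is a `(p, q)`-cover for the set `V` of coordinates: for every pair of disjoint
subsets `J, K ⊆ V` with `|J| ≤ p` and `|K| ≤ q` there is `a ∈ A` that is `0` on `J`
and `1` on `K`. -/
def IsCoverOn {n : ℕ} (V : Finset (Fin n)) (p q : ℕ) (A : Finset (Fin n → Bool)) : Prop :=
  ∀ J K : Finset (Fin n), J ⊆ V → K ⊆ V → Disjoint J K → J.card ≤ p → K.card ≤ q →
    ∃ a ∈ A, (∀ j ∈ J, a j = false) ∧ (∀ j ∈ K, a j = true)

/-- `N((p, q); m)`: the minimum cardinality of a `(p, q)`-cover for a set of size `m`. -/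
noncomputable def coverNum (p q m : ℕ) : ℕ :=
  sInf {k : ℕ | ∃ A : Finset (Fin m → Bool),
    IsCoverOn (Finset.univ : Finset (Fin m)) p q A ∧ A.card = k}

namespace MDNF

noncomputable section
open Classical

/-! ### Decision trees -/

inductive Tree (n : ℕ) where
  | leaf (h : (Fin n → Bool) → Bool)
  | node (q : Fin n → Bool) (t0 t1 : Tree n)

variable {n : ℕ}

def Tree.eval : Tree n → ((Fin n → Bool) → Bool) → ((Fin n → Bool) → Bool)
  | .leaf h, _ => h
  | .node q t0 t1, f => if f q then t1.eval f else t0.eval f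

def Tree.depth : Tree n → ℕ
  | .leaf _ => 0
  | .node _ t0 t1 => max t0.depth t1.depth + 1

def Tree.step : Tree n → Bool → Tree n
  | .leaf h, _ => .leaf h
  | .node _ t0 t1, b => if b then t1 else t0

def Tree.queryOf : Tree n → (Fin n → Bool)
  | .leaf _ => fun _ => true
  | .node q _ _ => q

def Tree.walk : Tree n → List Bool → Tree n
  | t, [] => t
  | t, b :: bs => Tree.walk (t.step b) bs

def Tree.output : Tree n → ((Fin n → Bool) → Bool)
  | .leaf h => h
  | .node _ _ _ => fun _ => false

theorem Tree.walk_append (t : Tree n) (l l' : List Bool) :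
    t.walk (l ++ l') = (t.walk l).walk l' := by
  induction l generalizing t with
  | nil => rfl
  | cons b bs ih => simp [Tree.walk, ih]

theorem Tree.eval_step (t : Tree n) (f : (Fin n → Bool) → Bool) :
    (t.step (f t.queryOf)).eval f = t.eval f := by
  cases t with
  | leaf h => rfl
  | node q t0 t1 =>
    simp only [Tree.step, Tree.queryOf, Tree.eval]
    by_cases h : f q = true
    · simp [h]
    · simp only [Bool.not_eq_true] at h; simp [h]

theorem Tree.walk_succ (t : Tree n) (f : (Fin n → Bool) → Bool) (k : ℕ) :
    t.walk (transcript (fun hist => (t.walk hist).queryOf) f (k+1)) =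
      (t.walk (transcript (fun hist => (t.walk hist).queryOf) f k)).step
        (f ((t.walk (transcript (fun hist => (t.walk hist).queryOf) f k)).queryOf)) := by
  rw [transcript, Tree.walk_append]; rfl

theorem Tree.walk_transcript_eval (t : Tree n) (f : (Fin n → Bool) → Bool) (m : ℕ) :
    (t.walk (transcript (fun hist => (t.walk hist).queryOf) f m)).eval f = t.eval f := by
  induction m with
  | zero => rfl
  | succ m ih => rw [Tree.walk_succ, Tree.eval_step, ih]

theorem Tree.depth_step_node (q : Fin n → Bool) (t0 t1 : Tree n) (b : Bool) :
    ((Tree.node q t0 t1).step b).depth + 1 ≤ (Tree.node q t0 t1).depth := by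
  cases b <;> simp [Tree.step, Tree.depth] <;> omega

theorem Tree.walk_transcript_leaf (t : Tree n) (f : (Fin n → Bool) → Bool) (m : ℕ)
    (hd : t.depth ≤ m) :
    ∃ h, t.walk (transcript (fun hist => (t.walk hist).queryOf) f m) = .leaf h := by
  suffices H : ∀ k, (∃ h, t.walk (transcript (fun hist => (t.walk hist).queryOf) f k) = .leaf h)
      ∨ (t.walk (transcript (fun hist => (t.walk hist).queryOf) f k)).depth + k ≤ t.depth by
    rcases H m with h | h
    · exact h
    · cases hww : t.walk (transcript (fun hist => (t.walk hist).queryOf) f m) with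
      | leaf h' => exact ⟨h', rfl⟩
      | node q t0 t1 =>
        exfalso
        rw [hww] at h
        simp [Tree.depth] at h
        omega
  intro k
  induction k with
  | zero =>
    cases hww : t with
    | leaf h' => exact Or.inl ⟨h', rfl⟩
    | node q t0 t1 =>
      right
      exact le_rfl
  | succ k ih =>
    rw [Tree.walk_succ]
    rcases ih with ⟨h', hh⟩ | hh
    · left; rw [hh]; exact ⟨h', rfl⟩
    · cases hww : t.walk (transcript (fun hist => (t.walk hist).queryOf) f k) with
      | leaf h' => left; exact ⟨h', rfl⟩
      | node q t0 t1 =>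
        right
        rw [hww] at hh
        have := Tree.depth_step_node q t0 t1 (f ((Tree.node q t0 t1).queryOf))
        omega

/-- Conversion: a decision tree of depth ≤ m gives a (σ, out) pair. -/
theorem tree_to_algorithm (t : Tree n) (m : ℕ) (hd : t.depth ≤ m)
    (f : (Fin n → Bool) → Bool) :
    (Tree.output (t.walk (transcript (fun hist => (t.walk hist).queryOf) f m))) = t.eval f := by
  obtain ⟨h, hh⟩ := Tree.walk_transcript_leaf t f m hd
  have := Tree.walk_transcript_eval t f m
  rw [hh] at this ⊢
  simpa [Tree.output, Tree.eval] using this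


/-! ### The algorithm -/

section Algo

variable (n s r : ℕ)

/-- characteristic vector of a set of coordinates -/
def chi (F : Finset (Fin n)) : Fin n → Bool := fun j => decide (j ∈ F)

/-- support of a point -/
def supp (x : Fin n → Bool) : Finset (Fin n) := Finset.univ.filter (fun j => x j = true)

theorem supp_chi (F : Finset (Fin n)) : supp n (chi n F) = F := by
  ext j; simp [supp, chi]

theorem mem_supp (x : Fin n → Bool) (j : Fin n) : j ∈ supp n x ↔ x j = true := by
  simp [supp]

/-- hypothesis determined by the set of terms found so far -/
def hyp (𝒯 : Finset (Finset (Fin n))) : (Fin n → Bool) → Bool :=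
  fun x => decide (∃ T ∈ 𝒯, T ⊆ supp n x)

theorem hyp_iff (𝒯 : Finset (Finset (Fin n))) (x : Fin n → Bool) :
    hyp n 𝒯 x = true ↔ ∃ T ∈ 𝒯, T ⊆ supp n x := by simp [hyp]

theorem covSet_nonempty (p q m : ℕ) :
    {k : ℕ | ∃ A : Finset (Fin m → Bool),
      IsCoverOn (Finset.univ : Finset (Fin m)) p q A ∧ A.card = k}.Nonempty := by
  refine ⟨(Finset.univ : Finset (Fin m → Bool)).card, Finset.univ, ?_, rfl⟩
  intro J K _ _ hd _ _
  refine ⟨fun j => decide (j ∈ K), Finset.mem_univ _, fun j hj => ?_, fun j hj => by simp [hj]⟩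
  simp only [decide_eq_false_iff_not]
  exact fun hjK => (Finset.disjoint_left.mp hd hj) hjK

/-- an optimal cover -/
def A0 (p q m : ℕ) : Finset (Fin m → Bool) :=
  (Nat.sInf_mem (covSet_nonempty p q m)).choose

theorem A0_cover (p q m : ℕ) : IsCoverOn (Finset.univ : Finset (Fin m)) p q (A0 p q m) :=
  (Nat.sInf_mem (covSet_nonempty p q m)).choose_spec.1

theorem A0_card (p q m : ℕ) : (A0 p q m).card = coverNum p q m :=
  (Nat.sInf_mem (covSet_nonempty p q m)).choose_spec.2

/-- union of found terms -/
def uV (𝒯 : Finset (Finset (Fin n))) : Finset (Fin n) := 𝒯.sup id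

/-- extension of a cover point on `uV 𝒯` (via a fixed indexing) by ones -/
def ptOf (𝒯 : Finset (Finset (Fin n))) (a : Fin (s * r) → Bool) : Fin n → Bool :=
  fun j => if h : (uV n 𝒯).toList.idxOf j < s * r ∧ j ∈ uV n 𝒯
    then a ⟨(uV n 𝒯).toList.idxOf j, h.1⟩ else true

def coverlist (𝒯 : Finset (Finset (Fin n))) : List (Fin n → Bool) :=
  (A0 (s - 1) r (s * r)).toList.map (ptOf n s r 𝒯)

theorem coverlist_length (𝒯 : Finset (Finset (Fin n))) :
    (coverlist n s r 𝒯).length = (A0 (s - 1) r (s * r)).card := by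
  simp [coverlist]

/-- states of the algorithm -/
inductive St (n : ℕ) where
  | scan (𝒯 : Finset (Finset (Fin n))) (as : List (Fin n → Bool))
  | mn (𝒯 : Finset (Finset (Fin n))) (F : Finset (Fin n)) (S : List (Fin n))
  | bs (𝒯 : Finset (Finset (Fin n))) (F : Finset (Fin n)) (S : List (Fin n)) (lo hi : ℕ)

/-- the decision tree of the algorithm, with fuel -/
def build : St n → ℕ → Tree n
  | .scan 𝒯 [], _ => .leaf (hyp n 𝒯)
  | .scan _ (_ :: _), 0 => .leaf (fun _ => false)
  | .mn _ _ _, 0 => .leaf (fun _ => false)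
  | .bs _ _ _ _ _, 0 => .leaf (fun _ => false)
  | .scan 𝒯 (x :: as), u+1 =>
      .node x (build (.scan 𝒯 as) u)
        (if hyp n 𝒯 x then build (.scan 𝒯 as) u
         else build (.mn 𝒯 ∅ (supp n x).toList) u)
  | .mn 𝒯 F S, u+1 =>
      .node (chi n F) (build (.bs 𝒯 F S 0 S.length) u)
        (build (.scan (insert F 𝒯) (coverlist n s r (insert F 𝒯))) u)
  | .bs 𝒯 F S lo hi, u+1 =>
      if hi ≤ lo + 1 then
        if hlt : lo < S.length then build (.mn 𝒯 (insert S[lo] F) (S.take lo)) u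
        else .leaf (fun _ => false)
      else
        .node (chi n (F ∪ (S.take ((lo + hi) / 2)).toFinset))
          (build (.bs 𝒯 F S ((lo + hi) / 2) hi) u)
          (build (.bs 𝒯 F S lo ((lo + hi) / 2)) u)

theorem depth_build (st : St n) (u : ℕ) : (build n s r st u).depth ≤ u := by
  induction u generalizing st with
  | zero =>
    cases st with
    | scan 𝒯 as => cases as <;> simp [build, Tree.depth]
    | mn 𝒯 F S => simp [build, Tree.depth]
    | bs 𝒯 F S lo hi => simp [build, Tree.depth]
  | succ u ih =>
    cases st with
    | scan 𝒯 as =>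
      cases as with
      | nil => simp [build, Tree.depth]
      | cons x as' =>
        simp only [build]
        have h1 := ih (St.scan 𝒯 as')
        have h2 := ih (St.mn 𝒯 ∅ (supp n x).toList)
        split <;> · simp only [Tree.depth]; omega
    | mn 𝒯 F S =>
      simp only [build, Tree.depth]
      have h1 := ih (St.bs 𝒯 F S 0 S.length)
      have h2 := ih (St.scan (insert F 𝒯) (coverlist n s r (insert F 𝒯)))
      omega
    | bs 𝒯 F S lo hi =>
      simp only [build]
      split
      · split
        · have := ih (St.mn 𝒯 (insert (S[lo]'(by assumption)) F) (S.take lo)); omega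
        · simp [Tree.depth]
      · simp only [Tree.depth]
        have h1 := ih (St.bs 𝒯 F S ((lo + hi) / 2) hi)
        have h2 := ih (St.bs 𝒯 F S lo ((lo + hi) / 2))
        omega

end Algo

/-! ### Minimal true points -/

section MT

variable {n s r : ℕ} {f : (Fin n → Bool) → Bool}

/-- interface for the set of minimal true points of `f` -/
structure GoodMT (n s r : ℕ) (f : (Fin n → Bool) → Bool)
    (MT : Finset (Finset (Fin n))) : Prop where
  iff : ∀ x, f x = true ↔ ∃ B ∈ MT, B ⊆ supp n x
  card_le : ∀ B ∈ MT, B.card ≤ r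
  count : MT.card ≤ s
  minimal : ∀ B ∈ MT, ∀ C ⊂ B, f (chi n C) = false
  complete : ∀ A : Finset (Fin n), f (chi n A) = true →
    (∀ B ⊂ A, f (chi n B) = false) → A ∈ MT

theorem GoodMT.chi_iff {MT} (hG : GoodMT n s r f MT) (A : Finset (Fin n)) :
    f (chi n A) = true ↔ ∃ B ∈ MT, B ⊆ A := by
  rw [hG.iff, supp_chi]

theorem GoodMT.mem_true {MT} (hG : GoodMT n s r f MT) {B} (hB : B ∈ MT) :
    f (chi n B) = true :=
  (hG.chi_iff B).mpr ⟨B, hB, Finset.Subset.refl B⟩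

theorem GoodMT.monoTrue {MT} (hG : GoodMT n s r f MT) {A A' : Finset (Fin n)}
    (h : A ⊆ A') (hA : f (chi n A) = true) : f (chi n A') = true := by
  obtain ⟨B, hB, hBA⟩ := (hG.chi_iff A).mp hA
  exact (hG.chi_iff A').mpr ⟨B, hB, hBA.trans h⟩

theorem GoodMT.monoFalse {MT} (hG : GoodMT n s r f MT) {A A' : Finset (Fin n)}
    (h : A ⊆ A') (hA : f (chi n A') = false) : f (chi n A) = false := by
  cases hfa : f (chi n A) with
  | false => rfl
  | true => rw [hG.monoTrue h hfa] at hA; exact hA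

theorem hyp_chi_iff (𝒯 : Finset (Finset (Fin n))) (A : Finset (Fin n)) :
    hyp n 𝒯 (chi n A) = true ↔ ∃ T ∈ 𝒯, T ⊆ A := by
  rw [hyp_iff, supp_chi]

theorem hypMonoFalse (𝒯 : Finset (Finset (Fin n))) {A A' : Finset (Fin n)}
    (h : A ⊆ A') (hA : hyp n 𝒯 (chi n A') = false) : hyp n 𝒯 (chi n A) = false := by
  cases hfa : hyp n 𝒯 (chi n A) with
  | false => rfl
  | true =>
    obtain ⟨T, hT, hTA⟩ := (hyp_chi_iff 𝒯 A).mp hfa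
    rw [(hyp_chi_iff 𝒯 A').mpr ⟨T, hT, hTA.trans h⟩] at hA
    exact hA

theorem chi_supp (x : Fin n → Bool) : chi n (supp n x) = x := by
  funext j
  cases h : x j <;> simp [chi, supp, h]

/-- construction of the set of minimal true points from an MDNF representation -/
theorem exists_goodMT (hf : IsMDNF n s r f) : ∃ MT, GoodMT n s r f MT := by
  classical
  obtain ⟨p, T, hp, hT, hiff⟩ := hf
  have hchiT : ∀ A : Finset (Fin n), (f (chi n A) = true ↔ ∃ i, T i ⊆ A) := by
    intro A
    rw [hiff]
    constructor
    · rintro ⟨i, hi⟩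
      exact ⟨i, fun j hj => by simpa [chi] using hi j hj⟩
    · rintro ⟨i, hi⟩
      exact ⟨i, fun j hj => by simp [chi, hi hj]⟩
  have hTtrue : ∀ i, f (chi n (T i)) = true := fun i =>
    (hchiT (T i)).mpr ⟨i, Finset.Subset.refl _⟩
  refine ⟨(Finset.univ.image T).filter
    (fun A => ∀ C ⊂ A, f (chi n C) = false), ?_⟩
  have hcomplete : ∀ A : Finset (Fin n), f (chi n A) = true →
      (∀ B ⊂ A, f (chi n B) = false) →
      A ∈ (Finset.univ.image T).filter (fun A => ∀ C ⊂ A, f (chi n C) = false) := by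
    intro A hA hmin
    obtain ⟨i, hi⟩ := (hchiT A).mp hA
    have : T i = A := by
      by_cases h : T i = A
      · exact h
      · exact absurd (hTtrue i)
          (by rw [hmin _ (Finset.ssubset_iff_subset_ne.mpr ⟨hi, h⟩)]; simp)
    refine Finset.mem_filter.mpr ⟨Finset.mem_image.mpr ⟨i, Finset.mem_univ _, this⟩, hmin⟩
  have hexmin : ∀ A : Finset (Fin n), f (chi n A) = true →
      ∃ B ∈ (Finset.univ.image T).filter (fun A => ∀ C ⊂ A, f (chi n C) = false),
        B ⊆ A := by
    intro A
    induction A using Finset.strongInductionOn with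
    | _ A ih =>
      intro hA
      by_cases hmin : ∀ B ⊂ A, f (chi n B) = false
      · exact ⟨A, hcomplete A hA hmin, Finset.Subset.refl A⟩
      · push_neg at hmin
        obtain ⟨C, hC, hCt⟩ := hmin
        have hCt' : f (chi n C) = true := by
          cases h : f (chi n C) with
          | false => exact absurd h hCt
          | true => rfl
        obtain ⟨B, hB, hBC⟩ := ih C hC hCt'
        exact ⟨B, hB, hBC.trans hC.subset⟩
  constructor
  · -- iff
    intro x
    constructor
    · intro hx
      obtain ⟨i, hi⟩ := hiff x |>.mp hx
      have hTi : T i ⊆ supp n x := fun j hj => (mem_supp n x j).mpr (hi j hj)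
      obtain ⟨B, hB, hBT⟩ := hexmin (T i) (hTtrue i)
      exact ⟨B, hB, hBT.trans hTi⟩
    · rintro ⟨B, hB, hBx⟩
      obtain ⟨i, _, hi⟩ := Finset.mem_image.mp (Finset.mem_filter.mp hB).1
      refine (hiff x).mpr ⟨i, fun j hj => (mem_supp n x j).mp ?_⟩
      exact hBx (hi ▸ hj)
  · -- card_le
    intro B hB
    obtain ⟨i, _, hi⟩ := Finset.mem_image.mp (Finset.mem_filter.mp hB).1
    exact hi ▸ (hT i).2
  · -- count
    calc ((Finset.univ.image T).filter _).card
        ≤ (Finset.univ.image T).card := Finset.card_filter_le _ _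
      _ ≤ (Finset.univ : Finset (Fin p)).card := Finset.card_image_le
      _ = p := by simp
      _ ≤ s := hp
  · -- minimal
    intro B hB C hC
    exact (Finset.mem_filter.mp hB).2 C hC
  · -- complete
    exact hcomplete

theorem uV_card_le {MT 𝒯} (hG : GoodMT n s r f MT) (h1 : 𝒯 ⊆ MT) :
    (uV n 𝒯).card ≤ 𝒯.card * r := by
  rw [uV, Finset.sup_eq_biUnion]
  calc (𝒯.biUnion id).card ≤ ∑ T ∈ 𝒯, (id T).card := Finset.card_biUnion_le
    _ ≤ 𝒯.card • r := Finset.sum_le_card_nsmul _ _ _ (fun T hT => hG.card_le T (h1 hT))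
    _ = 𝒯.card * r := by rw [smul_eq_mul]

/-- key lemma: if not all minimal terms were found, the cover list contains a
counterexample to the current hypothesis -/
theorem cover_hit {MT 𝒯} (hs : 1 ≤ s) (hr : 1 ≤ r) (hG : GoodMT n s r f MT)
    (h1 : 𝒯 ⊆ MT) (h2 : 𝒯 ≠ MT) :
    ∃ x ∈ coverlist n s r 𝒯, f x = true ∧ hyp n 𝒯 x = false := by
  classical
  have hss : 𝒯 ⊂ MT := Finset.ssubset_iff_subset_ne.mpr ⟨h1, h2⟩
  have hcard : 𝒯.card < MT.card := Finset.card_lt_card hss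
  have hks : 𝒯.card ≤ s - 1 := by have := hG.count; omega
  have hVcard : (uV n 𝒯).card ≤ s * r := by
    calc (uV n 𝒯).card ≤ 𝒯.card * r := uV_card_le hG h1
      _ ≤ s * r := Nat.mul_le_mul_right _ (by omega)
  obtain ⟨B, hBMT, hB𝒯⟩ := Finset.exists_of_ssubset hss
  set V := uV n 𝒯 with hV
  set K := B ∩ V with hK
  -- each found term has an element outside K
  have hne : ∀ T' ∈ 𝒯, (T' \ K).Nonempty := by
    intro T' hT'
    rw [Finset.sdiff_nonempty]
    intro hsub
    have hTB : T' ⊆ B := hsub.trans Finset.inter_subset_left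
    by_cases h : T' = B
    · exact hB𝒯 (h ▸ hT')
    · exact absurd (hG.mem_true (h1 hT'))
        (by rw [hG.minimal B hBMT T' (Finset.ssubset_iff_subset_ne.mpr ⟨hTB, h⟩)]; simp)
  set J := 𝒯.attach.image (fun T' => (hne T'.1 T'.2).choose) with hJ
  have hJV : J ⊆ V := by
    intro j hj
    obtain ⟨T', _, hT'⟩ := Finset.mem_image.mp hj
    have := (hne T'.1 T'.2).choose_spec
    rw [hT'] at this
    have hjT : j ∈ T'.1 := (Finset.mem_sdiff.mp this).1
    exact (Finset.le_sup (f := id) T'.2 : T'.1 ⊆ V) hjT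
  have hKV : K ⊆ V := Finset.inter_subset_right
  have hJK : Disjoint J K := by
    rw [Finset.disjoint_left]
    intro j hj
    obtain ⟨T', _, hT'⟩ := Finset.mem_image.mp hj
    have := (hne T'.1 T'.2).choose_spec
    rw [hT'] at this
    exact (Finset.mem_sdiff.mp this).2
  have hJcard : J.card ≤ s - 1 := by
    calc J.card ≤ 𝒯.attach.card := Finset.card_image_le
      _ = 𝒯.card := Finset.card_attach
      _ ≤ s - 1 := hks
  have hKcard : K.card ≤ r :=
    le_trans (Finset.card_le_card Finset.inter_subset_left) (hG.card_le B hBMT)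
  -- indexing
  have hsr : 0 < s * r := Nat.mul_pos hs hr
  have hlen : V.toList.length ≤ s * r := by rw [Finset.length_toList]; exact hVcard
  have hidx : ∀ j ∈ V, V.toList.idxOf j < s * r := fun j hj =>
    lt_of_lt_of_le (List.idxOf_lt_length_iff.mpr (Finset.mem_toList.mpr hj)) hlen
  set g : Fin n → Fin (s * r) := fun j =>
    if h : V.toList.idxOf j < s * r then ⟨_, h⟩ else ⟨0, hsr⟩ with hg
  have hpt : ∀ (a : Fin (s*r) → Bool) (j : Fin n), j ∈ V →
      ptOf n s r 𝒯 a j = a (g j) := by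
    intro a j hj
    simp only [ptOf, hg, ← hV]
    rw [dif_pos ⟨hidx j hj, hj⟩, dif_pos (hidx j hj)]
  have hpt' : ∀ (a : Fin (s*r) → Bool) (j : Fin n), j ∉ V →
      ptOf n s r 𝒯 a j = true := by
    intro a j hj
    simp only [ptOf, ← hV]
    rw [dif_neg (fun h => hj h.2)]
  have hgInj : ∀ j1 ∈ V, ∀ j2 ∈ V, g j1 = g j2 → j1 = j2 := by
    intro j1 hj1 j2 hj2 hgeq
    simp only [hg, dif_pos (hidx j1 hj1), dif_pos (hidx j2 hj2)] at hgeq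
    have := Fin.mk.inj_iff.mp hgeq
    exact (List.idxOf_inj (Finset.mem_toList.mpr hj1)).mp this
  -- apply the cover
  have hJ'K' : Disjoint (J.image g) (K.image g) := by
    rw [Finset.disjoint_left]
    intro v hv hv'
    obtain ⟨j1, hj1, hj1'⟩ := Finset.mem_image.mp hv
    obtain ⟨j2, hj2, hj2'⟩ := Finset.mem_image.mp hv'
    have : j1 = j2 := hgInj j1 (hJV hj1) j2 (hKV hj2) (by rw [hj1', hj2'])
    exact (Finset.disjoint_left.mp hJK hj1) (this ▸ hj2)
  have hJ'card : (J.image g).card ≤ s - 1 := le_trans Finset.card_image_le hJcard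
  have hK'card : (K.image g).card ≤ r := le_trans Finset.card_image_le hKcard
  obtain ⟨a, haA, haJ, haK⟩ := A0_cover (s-1) r (s*r) (J.image g) (K.image g)
    (Finset.subset_univ _) (Finset.subset_univ _) hJ'K' hJ'card hK'card
  refine ⟨ptOf n s r 𝒯 a, List.mem_map.mpr ⟨a, Finset.mem_toList.mpr haA, rfl⟩, ?_, ?_⟩
  · -- f (ptOf a) = true
    refine (hG.iff _).mpr ⟨B, hBMT, fun j hj => (mem_supp _ _ _).mpr ?_⟩
    by_cases hjV : j ∈ V
    · rw [hpt a j hjV]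
      exact haK (g j) (Finset.mem_image.mpr ⟨j, Finset.mem_inter.mpr ⟨hj, hjV⟩, rfl⟩)
    · exact hpt' a j hjV
  · -- hyp = false
    cases hhx : hyp n 𝒯 (ptOf n s r 𝒯 a) with
    | false => rfl
    | true =>
      exfalso
      obtain ⟨T', hT', hsub⟩ := (hyp_iff n 𝒯 _).mp hhx
      set j := (hne T' hT').choose with hjdef
      have hjspec := (hne T' hT').choose_spec
      have hjJ : j ∈ J := Finset.mem_image.mpr ⟨⟨T', hT'⟩, Finset.mem_attach _ _, rfl⟩
      have hjT : j ∈ T' := (Finset.mem_sdiff.mp hjspec).1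
      have hjV : j ∈ V := (Finset.le_sup (f := id) hT' : T' ⊆ V) hjT
      have : ptOf n s r 𝒯 a j = false := by
        rw [hpt a j hjV]
        exact haJ (g j) (Finset.mem_image.mpr ⟨j, hjJ, rfl⟩)
      have := (mem_supp n _ j).mp (hsub hjT)
      simp_all

end MT

/-! ### Fuel accounting -/

def Lc (n : ℕ) : ℕ := Nat.clog 2 n
def Ncov (s r : ℕ) : ℕ := (A0 (s - 1) r (s * r)).card
def RC (n s r : ℕ) : ℕ := Ncov s r + (r + 1) * (Lc n + 2)
def needScan (n s r k t : ℕ) : ℕ := t + (s - k) * RC n s r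
def needMin (n s r k c : ℕ) : ℕ :=
  (r + 1 - c) * (Lc n + 2) + Ncov s r + (s - k - 1) * RC n s r
def needBS (n s r k c gp : ℕ) : ℕ :=
  Nat.clog 2 gp + 1 + (r - c) * (Lc n + 2) + Ncov s r + (s - k - 1) * RC n s r

theorem fuel_scan_succ (n s r k t : ℕ) :
    needScan n s r k (t + 1) = needScan n s r k t + 1 := by
  unfold needScan; ring

theorem fuel_scan_to_min (n s r k t : ℕ) (hk : k < s) :
    needMin n s r k 0 + 1 ≤ needScan n s r k (t + 1) := by
  have e : needMin n s r k 0 = (s - k) * RC n s r := by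
    rw [needMin, RC, Nat.sub_zero]
    generalize hd : s - k - 1 = d
    rw [show s - k = d + 1 from by omega, Nat.succ_mul]
    ring
  rw [e, needScan]
  generalize (s - k) * RC n s r = X
  omega

theorem fuel_min_to_scan (n s r k c : ℕ) (hc : c ≤ r) :
    needScan n s r (k + 1) (Ncov s r) + 1 ≤ needMin n s r k c := by
  rw [needScan, needMin, show s - (k + 1) = s - k - 1 from by omega]
  have h1 : 0 < (r + 1 - c) * (Lc n + 2) := Nat.mul_pos (by omega) (by omega)
  generalize (r + 1 - c) * (Lc n + 2) = P at h1 ⊢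
  generalize (s - k - 1) * RC n s r = Q
  omega

theorem fuel_min_to_bs (n s r k c gp : ℕ) (hc : c ≤ r) (hgp : gp ≤ n) :
    needBS n s r k c gp + 1 ≤ needMin n s r k c := by
  have h1 : Nat.clog 2 gp ≤ Lc n := Nat.clog_mono_right _ hgp
  rw [needBS, needMin, show r + 1 - c = (r - c) + 1 from by omega, Nat.succ_mul]
  generalize (r - c) * (Lc n + 2) = P
  generalize (s - k - 1) * RC n s r = Q
  omega

theorem fuel_bs_to_min (n s r k c : ℕ) :
    needMin n s r k (c + 1) + 1 ≤ needBS n s r k c 1 := by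
  rw [needMin, needBS, Nat.clog_one_right, show r + 1 - (c + 1) = r - c from by omega]
  generalize (r - c) * (Lc n + 2) = P
  generalize (s - k - 1) * RC n s r = Q
  omega

theorem clog_half {g g' : ℕ} (hg : 2 ≤ g) (hg' : g' ≤ (g + 1) / 2) :
    Nat.clog 2 g' + 1 ≤ Nat.clog 2 g := by
  rw [Nat.clog_of_two_le (by norm_num) hg]
  have h2 : (g + 2 - 1) / 2 = (g + 1) / 2 := by omega
  have := Nat.clog_mono_right 2 (hg'.trans (le_of_eq h2.symm))
  omega

theorem fuel_bs_split (n s r k c gp gp' : ℕ) (hg : 2 ≤ gp) (hg' : gp' ≤ (gp + 1) / 2) :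
    needBS n s r k c gp' + 1 ≤ needBS n s r k c gp := by
  have := clog_half hg hg'
  rw [needBS, needBS]
  generalize (r - c) * (Lc n + 2) = P
  generalize (s - k - 1) * RC n s r = Q
  omega

/-! ### Invariants -/

section Master

variable {n s r : ℕ} {f : (Fin n → Bool) → Bool} {MT : Finset (Finset (Fin n))}

structure InvMin (n : ℕ) (f : (Fin n → Bool) → Bool)
    (MT 𝒯 : Finset (Finset (Fin n))) (F : Finset (Fin n)) (S : List (Fin n)) : Prop where
  sub : 𝒯 ⊆ MT
  ne : 𝒯 ≠ MT
  nodup : S.Nodup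
  disj : ∀ v ∈ F, v ∉ S
  tru : f (chi n (F ∪ S.toFinset)) = true
  nec : ∀ v ∈ F, f (chi n ((F.erase v) ∪ S.toFinset)) = false
  hypF : hyp n 𝒯 (chi n (F ∪ S.toFinset)) = false

structure InvBS (n : ℕ) (f : (Fin n → Bool) → Bool)
    (MT 𝒯 : Finset (Finset (Fin n))) (F : Finset (Fin n)) (S : List (Fin n))
    (lo hi : ℕ) : Prop where
  inv : InvMin n f MT 𝒯 F S
  hlo : lo < hi
  hhi : hi ≤ S.length
  glo : f (chi n (F ∪ (S.take lo).toFinset)) = false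
  ghi : f (chi n (F ∪ (S.take hi).toFinset)) = true

def InvScan (n s r : ℕ) (f : (Fin n → Bool) → Bool)
    (MT 𝒯 : Finset (Finset (Fin n))) (as : List (Fin n → Bool)) : Prop :=
  𝒯 ⊆ MT ∧ ∃ pref, coverlist n s r 𝒯 = pref ++ as ∧
    ∀ x ∈ pref, f x = true → hyp n 𝒯 x = true

/-- the bound `F ⊆ B ∈ MT` inside a minimization -/
theorem InvMin.bound (hG : GoodMT n s r f MT) {𝒯 F S} (hI : InvMin n f MT 𝒯 F S) :
    ∃ B ∈ MT, F ⊆ B ∧ B ⊆ F ∪ S.toFinset := by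
  obtain ⟨B, hB, hBsub⟩ := (hG.chi_iff _).mp hI.tru
  refine ⟨B, hB, ?_, hBsub⟩
  intro v hv
  by_contra hvB
  have hsub : B ⊆ (F.erase v) ∪ S.toFinset := by
    intro j hj
    rcases Finset.mem_union.mp (hBsub hj) with h | h
    · exact Finset.mem_union_left _ (Finset.mem_erase.mpr ⟨fun he => hvB (he ▸ hj), h⟩)
    · exact Finset.mem_union_right _ h
  have h1 := hG.monoFalse hsub (hI.nec v hv)
  rw [hG.mem_true hB] at h1
  simp at h1

theorem InvMin.card_le (hG : GoodMT n s r f MT) {𝒯 F S} (hI : InvMin n f MT 𝒯 F S) :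
    F.card ≤ r := by
  obtain ⟨B, hB, hFB, _⟩ := hI.bound hG
  exact le_trans (Finset.card_le_card hFB) (hG.card_le B hB)

theorem InvMin.k_lt (hG : GoodMT n s r f MT) {𝒯 F S} (hI : InvMin n f MT 𝒯 F S) :
    𝒯.card < s :=
  lt_of_lt_of_le (Finset.card_lt_card (Finset.ssubset_iff_subset_ne.mpr ⟨hI.sub, hI.ne⟩))
    hG.count

theorem scan_done (hs : 1 ≤ s) (hr : 1 ≤ r) (hG : GoodMT n s r f MT) {𝒯}
    (h1 : 𝒯 ⊆ MT)
    (hall : ∀ x ∈ coverlist n s r 𝒯, f x = true → hyp n 𝒯 x = true) :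
    hyp n 𝒯 = f := by
  by_cases h2 : 𝒯 = MT
  · subst h2
    funext x
    cases hfx : f x with
    | true =>
      obtain ⟨B, hB, hBx⟩ := (hG.iff x).mp hfx
      exact (hyp_iff n _ x).mpr ⟨B, hB, hBx⟩
    | false =>
      cases hhx : hyp n 𝒯 x with
      | false => rfl
      | true =>
        obtain ⟨B, hB, hBx⟩ := (hyp_iff n 𝒯 x).mp hhx
        have h3 := (hG.iff x).mpr ⟨B, hB, hBx⟩
        rw [hfx] at h3
        exact h3.symm
  · obtain ⟨x, hx, hfx, hhx⟩ := cover_hit hs hr hG h1 h2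
    rw [hall x hx hfx] at hhx
    exact absurd hhx (by simp)

/-- the fuel-based condition for each state -/
def Cond (n s r : ℕ) (f : (Fin n → Bool) → Bool) (MT : Finset (Finset (Fin n))) :
    St n → ℕ → Prop
  | .scan 𝒯 as, u => InvScan n s r f MT 𝒯 as ∧ needScan n s r 𝒯.card as.length ≤ u
  | .mn 𝒯 F S, u => InvMin n f MT 𝒯 F S ∧ needMin n s r 𝒯.card F.card ≤ u
  | .bs 𝒯 F S lo hi, u =>
      InvBS n f MT 𝒯 F S lo hi ∧ needBS n s r 𝒯.card F.card (hi - lo) ≤ u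

theorem eval_scan_nil (hs : 1 ≤ s) (hr : 1 ≤ r) (hG : GoodMT n s r f MT) {𝒯} (u : ℕ)
    (hI : InvScan n s r f MT 𝒯 []) :
    Tree.eval (build n s r (.scan 𝒯 []) u) f = f := by
  obtain ⟨h1, pref, hfull, hpref⟩ := hI
  have hb : build n s r (.scan 𝒯 []) u = .leaf (hyp n 𝒯) := by cases u <;> rfl
  rw [hb]
  show hyp n 𝒯 = f
  refine scan_done hs hr hG h1 (fun x hx => hpref x ?_)
  rw [hfull] at hx
  simpa using hx


theorem master (hn : 2 ≤ n) (hr : 1 ≤ r) (hs : 1 ≤ s) (hG : GoodMT n s r f MT) :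
    ∀ u : ℕ, ∀ st : St n, Cond n s r f MT st u →
      Tree.eval (build n s r st u) f = f := by
  intro u
  induction u with
  | zero =>
    intro st hc
    cases st with
    | scan 𝒯 as =>
      cases as with
      | nil => exact eval_scan_nil hs hr hG 0 hc.1
      | cons x as' =>
        exfalso
        have h2 := hc.2
        rw [needScan] at h2
        generalize (s - 𝒯.card) * RC n s r = X at h2
        simp at h2
    | mn 𝒯 F S =>
      exfalso
      have hcr : F.card ≤ r := hc.1.card_le hG
      have h2 := hc.2
      rw [needMin] at h2
      have h3 : 0 < (r + 1 - F.card) * (Lc n + 2) := Nat.mul_pos (by omega) (by omega)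
      generalize (r + 1 - F.card) * (Lc n + 2) = P at h2 h3
      generalize (s - 𝒯.card - 1) * RC n s r = Q at h2
      omega
    | bs 𝒯 F S lo hi =>
      exfalso
      have h2 := hc.2
      rw [needBS] at h2
      generalize (r - F.card) * (Lc n + 2) = P at h2
      generalize (s - 𝒯.card - 1) * RC n s r = Q at h2
      omega
  | succ u ih =>
    intro st hc
    cases st with
    | scan 𝒯 as =>
      cases as with
      | nil => exact eval_scan_nil hs hr hG _ hc.1
      | cons x as' =>
        obtain ⟨⟨hTMT, pref, hfull, hpref⟩, hfuel⟩ := hc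
        simp only [build, Tree.eval]
        have hscan : Cond n s r f MT (.scan 𝒯 as') u → True := fun _ => trivial
        -- common pieces
        have hInvScan' : (f x = true → hyp n 𝒯 x = true) →
            InvScan n s r f MT 𝒯 as' := by
          intro himp
          refine ⟨hTMT, pref ++ [x], by rw [hfull, List.append_assoc]; rfl, ?_⟩
          intro y hy hfy
          rcases List.mem_append.mp hy with h | h
          · exact hpref y h hfy
          · rw [List.mem_singleton.mp h] at hfy ⊢
            exact himp hfy
        have hfuel' : needScan n s r 𝒯.card as'.length ≤ u := by
          have := fuel_scan_succ n s r 𝒯.card as'.length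
          simp only [List.length_cons] at hfuel
          omega
        cases hfx : f x with
        | false =>
          simp only [Bool.false_eq_true, if_false]
          exact ih (.scan 𝒯 as') ⟨hInvScan' (fun h => absurd h (by simp [hfx])), hfuel'⟩
        | true =>
          simp only [if_true]
          cases hhx : hyp n 𝒯 x with
          | true =>
            simp only [if_true]
            exact ih (.scan 𝒯 as') ⟨hInvScan' (fun _ => hhx), hfuel'⟩
          | false =>
            simp only [Bool.false_eq_true, if_false]
            -- a counterexample: start a minimization
            have h2 : 𝒯 ≠ MT := by
              intro h
              subst h
              obtain ⟨B, hB, hBx⟩ := (hG.iff x).mp hfx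
              rw [(hyp_iff n 𝒯 x).mpr ⟨B, hB, hBx⟩] at hhx
              simp at hhx
            have hchix : chi n (supp n x) = x := chi_supp x
            have hk : 𝒯.card < s :=
              lt_of_lt_of_le
                (Finset.card_lt_card (Finset.ssubset_iff_subset_ne.mpr ⟨hTMT, h2⟩))
                hG.count
            refine ih (.mn 𝒯 ∅ (supp n x).toList) ⟨⟨hTMT, h2, Finset.nodup_toList _,
              by simp, ?_, by simp, ?_⟩, ?_⟩
            · rw [Finset.empty_union, Finset.toList_toFinset, hchix]; exact hfx
            · rw [Finset.empty_union, Finset.toList_toFinset, hchix]; exact hhx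
            · have := fuel_scan_to_min n s r 𝒯.card as'.length hk
              simp only [List.length_cons] at hfuel
              simp only [Finset.card_empty]
              omega
    | mn 𝒯 F S =>
      obtain ⟨hI, hfuel⟩ := hc
      have hcr : F.card ≤ r := hI.card_le hG
      have hk : 𝒯.card < s := hI.k_lt hG
      simp only [build, Tree.eval]
      cases hq : f (chi n F) with
      | true =>
        simp only [if_true]
        -- F is a new minimal term
        have hFMT : F ∈ MT := by
          refine hG.complete F hq ?_
          intro C hC
          obtain ⟨v, hvF, hvC⟩ := Finset.exists_of_ssubset hC
          have hsub : C ⊆ (F.erase v) ∪ S.toFinset := by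
            intro j hj
            exact Finset.mem_union_left _
              (Finset.mem_erase.mpr ⟨fun he => hvC (he ▸ hj), hC.subset hj⟩)
          exact hG.monoFalse hsub (hI.nec v hvF)
        have hFnew : F ∉ 𝒯 := by
          intro h
          have := (hyp_chi_iff 𝒯 (F ∪ S.toFinset)).mpr ⟨F, h, Finset.subset_union_left⟩
          rw [hI.hypF] at this
          simp at this
        refine ih (.scan (insert F 𝒯) (coverlist n s r (insert F 𝒯)))
          ⟨⟨Finset.insert_subset_iff.mpr ⟨hFMT, hI.sub⟩, [], rfl, by simp⟩, ?_⟩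
        rw [Finset.card_insert_of_notMem hFnew, coverlist_length]
        have := fuel_min_to_scan n s r 𝒯.card F.card hcr
        have hN : (A0 (s - 1) r (s * r)).card = Ncov s r := rfl
        rw [hN]
        omega
      | false =>
        simp only [Bool.false_eq_true, if_false]
        have hS0 : S ≠ [] := by
          intro h
          subst h
          have := hI.tru
          simp only [List.toFinset_nil, Finset.union_empty] at this
          rw [hq] at this
          simp at this
        have hlen : 0 < S.length := List.length_pos_iff.mpr hS0
        have hSn : S.length ≤ n := by
          have h1 : S.toFinset.card = S.length := List.toFinset_card_of_nodup hI.nodup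
          have h2 : S.toFinset.card ≤ n := by
            have := Finset.card_le_univ S.toFinset
            simpa using this
          omega
        refine ih (.bs 𝒯 F S 0 S.length) ⟨⟨hI, hlen, le_rfl, ?_, ?_⟩, ?_⟩
        · simpa using hq
        · rw [List.take_length]; exact hI.tru
        · have := fuel_min_to_bs n s r 𝒯.card F.card (S.length - 0) hcr (by omega)
          omega
    | bs 𝒯 F S lo hi =>
      obtain ⟨hB, hfuel⟩ := hc
      have hI := hB.inv
      have hcr : F.card ≤ r := hI.card_le hG
      have hk : 𝒯.card < s := hI.k_lt hG
      simp only [build]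
      by_cases hle : hi ≤ lo + 1
      · -- hi = lo + 1 : binary search done, add the found variable
        have hhieq : hi = lo + 1 := by have := hB.hlo; omega
        have hlt : lo < S.length := by have := hB.hhi; omega
        rw [if_pos hle, dif_pos hlt]
        set v := S[lo]'hlt with hv
        have hvS : v ∈ S := List.getElem_mem hlt
        have hvF : v ∉ F := fun h => hI.disj v h hvS
        have hvtake : v ∉ S.take lo := by
          intro hmem
          obtain ⟨i, hilen, hEq⟩ := List.getElem_of_mem hmem
          have hilo : i < lo := by
            have h' : i < lo ∧ i < S.length := by simpa [List.length_take] using hilen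
            exact h'.1
          rw [List.getElem_take] at hEq
          have : i = lo := (hI.nodup.getElem_inj_iff).mp hEq
          omega
        have hsetEq : insert v F ∪ (S.take lo).toFinset =
            F ∪ (S.take (lo + 1)).toFinset := by
          rw [List.take_succ, List.getElem?_eq_getElem hlt]
          ext j
          simp only [Finset.mem_union, Finset.mem_insert, List.mem_toFinset,
            List.toFinset_append, Option.toList_some, List.toFinset_cons,
            List.toFinset_nil, insert_empty_eq, Finset.mem_insert, Finset.mem_union,
            List.mem_toFinset, Finset.mem_singleton]
          tauto
        have hsub0 : insert v F ∪ (S.take lo).toFinset ⊆ F ∪ S.toFinset := by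
          intro j hj
          rcases Finset.mem_union.mp hj with h | h
          · rcases Finset.mem_insert.mp h with h | h
            · exact Finset.mem_union_right _ (List.mem_toFinset.mpr (h ▸ hvS))
            · exact Finset.mem_union_left _ h
          · exact Finset.mem_union_right _
              (List.mem_toFinset.mpr (List.take_subset _ _ (List.mem_toFinset.mp h)))
        refine ih (.mn 𝒯 (insert v F) (S.take lo)) ⟨⟨hI.sub, hI.ne,
          hI.nodup.sublist (List.take_sublist _ _), ?_, ?_, ?_, ?_⟩, ?_⟩
        · -- disj
          intro v' hv'
          rcases Finset.mem_insert.mp hv' with h | h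
          · exact h ▸ hvtake
          · exact fun hmem => hI.disj v' h (List.take_subset _ _ hmem)
        · -- tru
          rw [hsetEq, ← hhieq]
          exact hB.ghi
        · -- nec
          intro v' hv'
          rcases Finset.mem_insert.mp hv' with h | h
          · subst h
            rw [Finset.erase_insert hvF]
            exact hB.glo
          · have hvv' : v ≠ v' := fun he => hI.disj v' h (he ▸ hvS)
            rw [Finset.erase_insert_of_ne hvv']
            refine hG.monoFalse ?_ (hI.nec v' h)
            intro j hj
            rcases Finset.mem_union.mp hj with h' | h'
            · rcases Finset.mem_insert.mp h' with h' | h'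
              · exact Finset.mem_union_right _ (List.mem_toFinset.mpr (h' ▸ hvS))
              · exact Finset.mem_union_left _ h'
            · exact Finset.mem_union_right _
                (List.mem_toFinset.mpr (List.take_subset _ _ (List.mem_toFinset.mp h')))
        · -- hypF
          exact hypMonoFalse 𝒯 hsub0 hI.hypF
        · -- fuel
          rw [Finset.card_insert_of_notMem hvF]
          have := fuel_bs_to_min n s r 𝒯.card F.card
          rw [hhieq] at hfuel
          simp only [Nat.add_sub_cancel_left] at hfuel
          omega
      · -- split the interval
        rw [if_neg hle]
        simp only [Tree.eval]
        have h2g : 2 ≤ hi - lo := by have := hB.hlo; omega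
        cases hq : f (chi n (F ∪ (S.take ((lo + hi) / 2)).toFinset)) with
        | true =>
          simp only [if_true]
          refine ih (.bs 𝒯 F S lo ((lo + hi) / 2))
            ⟨⟨hI, by omega, by have := hB.hhi; omega, hB.glo, hq⟩, ?_⟩
          have := fuel_bs_split n s r 𝒯.card F.card (hi - lo) ((lo + hi) / 2 - lo) h2g
            (by omega)
          omega
        | false =>
          simp only [Bool.false_eq_true, if_false]
          refine ih (.bs 𝒯 F S ((lo + hi) / 2) hi)
            ⟨⟨hI, by omega, hB.hhi, hq, hB.ghi⟩, ?_⟩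
          have := fuel_bs_split n s r 𝒯.card F.card (hi - lo) (hi - (lo + hi) / 2) h2g
            (by omega)
          omega

end Master
end
end MDNF

/-- There is a universal constant `c > 0` such that for all `n ≥ 2`, `r ≥ 1` and `s ≥ 1`,
some deterministic adaptive membership-query algorithm with query budget
`⌈c·(s·N((s−1, r); s·r) + r·s·log₂ n)⌉` exactly learns the class of all `s`-term
`r`-MDNF functions on `{0,1}^n`. -/
theorem deterministic_upper_bound_cover_free :
    ∃ c : ℝ, 0 < c ∧ ∀ n r s : ℕ, 2 ≤ n → 1 ≤ r → 1 ≤ s →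
      ∃ (σ : List Bool → (Fin n → Bool)) (out : List Bool → ((Fin n → Bool) → Bool)),
        ∀ f : (Fin n → Bool) → Bool, IsMDNF n s r f →
          out (transcript σ f
            ⌈c * ((s : ℝ) * (coverNum (s - 1) r (s * r) : ℝ) +
              (r : ℝ) * s * Real.logb 2 n)⌉₊) = f := by
  refine ⟨10, by norm_num, ?_⟩
  intro n r s hn hr hs
  set m : ℕ := ⌈(10:ℝ) * ((s : ℝ) * (coverNum (s - 1) r (s * r) : ℝ) +
      (r : ℝ) * s * Real.logb 2 n)⌉₊ with hm
  -- basic real facts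
  have hn0 : (0:ℝ) < (n:ℝ) := by exact_mod_cast (by omega : 0 < n)
  have hlb : 1 ≤ Real.logb 2 (n:ℝ) := by
    have h1 : Real.logb 2 2 ≤ Real.logb 2 (n:ℝ) :=
      (Real.logb_le_logb (by norm_num) (by norm_num) hn0).mpr (by exact_mod_cast hn)
    rwa [Real.logb_self_eq_one (by norm_num)] at h1
  have hL1 : 1 ≤ MDNF.Lc n := Nat.clog_pos (by norm_num) hn
  have hLreal : (MDNF.Lc n : ℝ) ≤ Real.logb 2 (n:ℝ) + 1 := by
    have hpow : (2:ℕ) ^ (MDNF.Lc n - 1) < n :=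
      Nat.pow_pred_clog_lt_self (by norm_num) (by omega)
    have h2 : ((2:ℝ)) ^ (MDNF.Lc n - 1) ≤ (n:ℝ) := by exact_mod_cast hpow.le
    have h3 : ((MDNF.Lc n - 1 : ℕ) : ℝ) ≤ Real.logb 2 (n:ℝ) := by
      have h4 : Real.logb 2 ((2:ℝ) ^ (MDNF.Lc n - 1)) ≤ Real.logb 2 (n:ℝ) :=
        (Real.logb_le_logb (by norm_num) (by positivity) hn0).mpr h2
      rwa [Real.logb_pow, Real.logb_self_eq_one (by norm_num), mul_one] at h4
    have h5 : ((MDNF.Lc n - 1 : ℕ) : ℝ) = (MDNF.Lc n : ℝ) - 1 := by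
      rw [Nat.cast_sub hL1]; norm_num
    linarith
  -- the fuel bound
  have hfuelbound : MDNF.needScan n s r 0 (MDNF.Ncov s r) ≤ m := by
    have hNc : MDNF.Ncov s r = coverNum (s - 1) r (s * r) := MDNF.A0_card _ _ _
    have hkey : ((MDNF.needScan n s r 0 (MDNF.Ncov s r) : ℕ) : ℝ) ≤
        (10:ℝ) * ((s : ℝ) * (coverNum (s - 1) r (s * r) : ℝ) +
          (r : ℝ) * s * Real.logb 2 (n:ℝ)) := by
      rw [MDNF.needScan, MDNF.RC, Nat.sub_zero, ← hNc]
      push_cast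
      have hs1 : (1:ℝ) ≤ (s:ℝ) := by exact_mod_cast hs
      have hr1 : (1:ℝ) ≤ (r:ℝ) := by exact_mod_cast hr
      have hN0 : (0:ℝ) ≤ (MDNF.Ncov s r : ℝ) := by positivity
      set N : ℝ := (MDNF.Ncov s r : ℝ)
      set L : ℝ := (MDNF.Lc n : ℝ)
      set lb : ℝ := Real.logb 2 (n:ℝ)
      have h1 : (r:ℝ) + 1 ≤ 2 * r := by linarith
      have h2 : L + 2 ≤ 4 * lb := by linarith
      have h3 : ((r:ℝ) + 1) * (L + 2) ≤ (2 * r) * (4 * lb) := by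
        apply mul_le_mul h1 h2 (by positivity) (by linarith)
      have h4 : (s:ℝ) * (((r:ℝ) + 1) * (L + 2)) ≤ (s:ℝ) * ((2 * r) * (4 * lb)) :=
        mul_le_mul_of_nonneg_left h3 (by positivity)
      have h5 : N ≤ (s:ℝ) * N := le_mul_of_one_le_left hN0 hs1
      have h6 : (0:ℝ) ≤ (s:ℝ) * N := by positivity
      have h7 : (0:ℝ) ≤ (r:ℝ) * s * lb := by positivity
      nlinarith [h4, h5, h6, h7]
    have hceil := Nat.le_ceil ((10:ℝ) * ((s : ℝ) * (coverNum (s - 1) r (s * r) : ℝ) +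
      (r : ℝ) * s * Real.logb 2 (n:ℝ)))
    have h10 := hkey.trans hceil
    rw [hm]
    exact_mod_cast h10
  -- the algorithm
  set tree : MDNF.Tree n := MDNF.build n s r (.scan ∅ (MDNF.coverlist n s r ∅)) m with htree
  refine ⟨fun hist => (tree.walk hist).queryOf, fun hist => (tree.walk hist).output, ?_⟩
  intro f hf
  obtain ⟨MT, hG⟩ := MDNF.exists_goodMT hf
  have heval : tree.eval f = f := by
    apply MDNF.master hn hr hs hG m (.scan ∅ (MDNF.coverlist n s r ∅))
    refine ⟨⟨Finset.empty_subset _, [], rfl, by simp⟩, ?_⟩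
    rw [Finset.card_empty, MDNF.coverlist_length]
    exact hfuelbound
  have hdepth : tree.depth ≤ m := MDNF.depth_build n s r _ m
  have h9 := MDNF.tree_to_algorithm tree m hdepth f
  rw [heval] at h9
  exact h9
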